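/- Let k be a field containing a primitive cube root of unity ζ and A = k[x,y]⟨μ₃⟩ the skew group algebra for the action σ(x)=ζx, σ(y)=ζ²y. For a,b ∈ k, the 3-dimensional module M_{(a,b)} = k e₁ ⊕ k e₂ ⊕ k e₃ with x acting by diag(a, ζ⁻¹a, ζ⁻²a), y acting by diag(b, ζ⁻²b, ζ⁻¹b), and σ acting by the cyclic permutation matrix, is a simple A-module whenever ab ≠ 0. -/
import Mathlib


/-- The defining relations of the skew group algebra
`A = k⟨x,y,σ⟩/(xy − yx, σx − ζxσ, σy − ζ²yσ, σ³ − 1)`, i.e. the crossed product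
`k[x,y]⟨μ₃⟩` for the action `σ(x) = ζx`, `σ(y) = ζ²y`.  Generator `0` is `x`,
generator `1` is `y`, generator `2` is `σ`. -/
inductive MuRel (k : Type*) [CommRing k] (ζ : k) :
    FreeAlgebra k (Fin 3) → FreeAlgebra k (Fin 3) → Prop
  | comm : MuRel k ζ (FreeAlgebra.ι k (0 : Fin 3) * FreeAlgebra.ι k (1 : Fin 3))
      (FreeAlgebra.ι k (1 : Fin 3) * FreeAlgebra.ι k (0 : Fin 3))
  | sx : MuRel k ζ (FreeAlgebra.ι k (2 : Fin 3) * FreeAlgebra.ι k (0 : Fin 3))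
      (ζ • (FreeAlgebra.ι k (0 : Fin 3) * FreeAlgebra.ι k (2 : Fin 3)))
  | sy : MuRel k ζ (FreeAlgebra.ι k (2 : Fin 3) * FreeAlgebra.ι k (1 : Fin 3))
      ((ζ * ζ) • (FreeAlgebra.ι k (1 : Fin 3) * FreeAlgebra.ι k (2 : Fin 3)))
  | s3 : MuRel k ζ (FreeAlgebra.ι k (2 : Fin 3) ^ 3) 1

/-- The skew group algebra `k[x,y]⟨μ₃⟩`. -/
abbrev MuAlg (k : Type*) [CommRing k] (ζ : k) := RingQuot (MuRel k ζ)

/-- The image of `x` in `k[x,y]⟨μ₃⟩`. -/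
noncomputable def muX (k : Type*) [CommRing k] (ζ : k) : MuAlg k ζ :=
  RingQuot.mkAlgHom k (MuRel k ζ) (FreeAlgebra.ι k 0)

/-- The image of `y` in `k[x,y]⟨μ₃⟩`. -/
noncomputable def muY (k : Type*) [CommRing k] (ζ : k) : MuAlg k ζ :=
  RingQuot.mkAlgHom k (MuRel k ζ) (FreeAlgebra.ι k 1)

/-- The image of `σ` in `k[x,y]⟨μ₃⟩`. -/
noncomputable def muS (k : Type*) [CommRing k] (ζ : k) : MuAlg k ζ :=
  RingQuot.mkAlgHom k (MuRel k ζ) (FreeAlgebra.ι k 2)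

/-- For `a, b ∈ k` with `ab ≠ 0`, the 3-dimensional module
`M₍a,b₎ = k e₁ ⊕ k e₂ ⊕ k e₃` over the skew group algebra `A = k[x,y]⟨μ₃⟩`,
on which `x` acts by `diag(a, ζ⁻¹a, ζ⁻²a)`, `y` acts by `diag(b, ζ⁻²b, ζ⁻¹b)`
and `σ` acts by the cyclic permutation matrix, is a simple `A`-module: any
`A`-invariant subspace is `⊥` or `⊤`. -/
theorem stmt_7 {k : Type*} [Field k] {ζ : k} (hζ : IsPrimitiveRoot ζ 3)
    (a b : k) (hab : a * b ≠ 0)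
    (ρ : MuAlg k ζ →ₐ[k] Matrix (Fin 3) (Fin 3) k)
    (hx : ρ (muX k ζ) = Matrix.diagonal ![a, ζ⁻¹ * a, ζ⁻¹ ^ 2 * a])
    (hy : ρ (muY k ζ) = Matrix.diagonal ![b, ζ⁻¹ ^ 2 * b, ζ⁻¹ * b])
    (hσ : ρ (muS k ζ) = !![0,0,1; 1,0,0; 0,1,0])
    (W : Submodule k (Fin 3 → k))
    (hW : ∀ (r : MuAlg k ζ), ∀ v ∈ W, (ρ r).mulVec v ∈ W) :
    W = ⊥ ∨ W = ⊤ := by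
  have ha : a ≠ 0 := left_ne_zero_of_mul hab
  have h3 : ζ ^ 3 = 1 := hζ.pow_eq_one
  have hζ0 : ζ ≠ 0 := by
    intro h; rw [h] at h3; norm_num at h3
  have hζ1 : ζ ≠ 1 := hζ.ne_one (by norm_num)
  have hζ2 : ζ ^ 2 ≠ 1 := by
    intro h
    apply hζ1
    have : ζ ^ 3 = ζ := by rw [pow_succ, h, one_mul]
    rw [h3] at this; exact this.symm
  have hinv : ζ⁻¹ = ζ ^ 2 := by
    field_simp
    linear_combination -h3
  set d : Fin 3 → k := ![a, ζ^2 * a, ζ * a] with hd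
  have hvec : ![a, ζ⁻¹ * a, ζ⁻¹ ^ 2 * a] = d := by
    rw [hinv, hd]; funext m; fin_cases m
    · rfl
    · rfl
    · show (ζ ^ 2) ^ 2 * a = ζ * a
      linear_combination ζ * a * h3
  have hx' : ρ (muX k ζ) = Matrix.diagonal d := by rw [hx, hvec]
  have hDW : ∀ v ∈ W, (Matrix.diagonal d).mulVec v ∈ W := by
    intro v hv
    have := hW (muX k ζ) v hv
    rwa [hx'] at this
  have hSW : ∀ v ∈ W, (!![0,0,1; 1,0,0; 0,1,0] : Matrix (Fin 3) (Fin 3) k).mulVec v ∈ W := by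
    intro v hv
    have := hW (muS k ζ) v hv
    rwa [hσ] at this
  by_cases hbot : W = ⊥
  · exact Or.inl hbot
  right
  obtain ⟨v, hv, hv0⟩ := Submodule.ne_bot_iff W |>.mp hbot
  obtain ⟨i, hvi⟩ : ∃ i, v i ≠ 0 := by
    by_contra h
    push_neg at h
    exact hv0 (funext h)
  -- cyclic permutation of basis vectors
  have hcyc0 : (!![0,0,1; 1,0,0; 0,1,0] : Matrix (Fin 3) (Fin 3) k).mulVec
      (Pi.single (0 : Fin 3) (1 : k)) = Pi.single 1 1 := by
    funext m
    fin_cases m <;>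
      simp [Matrix.mulVec, dotProduct, Fin.sum_univ_three, Pi.single_apply]
  have hcyc1 : (!![0,0,1; 1,0,0; 0,1,0] : Matrix (Fin 3) (Fin 3) k).mulVec
      (Pi.single (1 : Fin 3) (1 : k)) = Pi.single 2 1 := by
    funext m
    fin_cases m <;>
      simp [Matrix.mulVec, dotProduct, Fin.sum_univ_three, Pi.single_apply]
  have hcyc2 : (!![0,0,1; 1,0,0; 0,1,0] : Matrix (Fin 3) (Fin 3) k).mulVec
      (Pi.single (2 : Fin 3) (1 : k)) = Pi.single 0 1 := by
    funext m
    fin_cases m <;>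
      simp [Matrix.mulVec, dotProduct, Fin.sum_univ_three, Pi.single_apply]
  -- once one basis vector is in W, W is everything
  have hall : ∀ i : Fin 3, Pi.single i (1 : k) ∈ W → W = ⊤ := by
    intro i hi
    have h012 : Pi.single (0 : Fin 3) (1 : k) ∈ W ∧ Pi.single (1 : Fin 3) (1 : k) ∈ W ∧
        Pi.single (2 : Fin 3) (1 : k) ∈ W := by
      fin_cases i
      · exact ⟨hi, by rw [← hcyc0]; exact hSW _ hi,
          by rw [← hcyc1, ← hcyc0]; exact hSW _ (hSW _ hi)⟩
      · exact ⟨by rw [← hcyc2, ← hcyc1]; exact hSW _ (hSW _ hi),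
          hi, by rw [← hcyc1]; exact hSW _ hi⟩
      · exact ⟨by rw [← hcyc2]; exact hSW _ hi,
          by rw [← hcyc0, ← hcyc2]; exact hSW _ (hSW _ hi), hi⟩
    obtain ⟨h0, h1, h2⟩ := h012
    rw [Submodule.eq_top_iff']
    intro u
    have hu : u = u 0 • (Pi.single 0 1 : Fin 3 → k) + u 1 • (Pi.single 1 1 : Fin 3 → k)
        + u 2 • (Pi.single 2 1 : Fin 3 → k) := by
      funext m
      fin_cases m <;> simp [Pi.single_apply]
    rw [hu]
    exact W.add_mem (W.add_mem (W.smul_mem _ h0) (W.smul_mem _ h1)) (W.smul_mem _ h2)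
  have h1W := hDW v hv
  have h2W := hDW _ h1W
  fin_cases i
  · -- v 0 ≠ 0
    have hw : ((Matrix.diagonal d).mulVec ((Matrix.diagonal d).mulVec v)
        - (d 1 + d 2) • (Matrix.diagonal d).mulVec v + (d 1 * d 2) • v) ∈ W :=
      W.add_mem (W.sub_mem h2W (W.smul_mem _ h1W)) (W.smul_mem _ hv)
    have hc : ((Matrix.diagonal d).mulVec ((Matrix.diagonal d).mulVec v)
        - (d 1 + d 2) • (Matrix.diagonal d).mulVec v + (d 1 * d 2) • v)
        = ((d 0 - d 1) * (d 0 - d 2) * v 0) • (Pi.single 0 1 : Fin 3 → k) := by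
      funext m
      fin_cases m <;>
        simp [Matrix.mulVec_diagonal, Pi.single_apply] <;> ring
    have hc0 : (d 0 - d 1) * (d 0 - d 2) * v 0 ≠ 0 := by
      have e1 : d 0 - d 1 = a * (1 - ζ ^ 2) := by simp [hd]; ring
      have e2 : d 0 - d 2 = a * (1 - ζ) := by simp [hd]; ring
      rw [e1, e2]
      exact mul_ne_zero (mul_ne_zero (mul_ne_zero ha (sub_ne_zero.mpr (Ne.symm hζ2)))
        (mul_ne_zero ha (sub_ne_zero.mpr (Ne.symm hζ1)))) hvi
    rw [hc] at hw
    have := W.smul_mem ((d 0 - d 1) * (d 0 - d 2) * v 0)⁻¹ hw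
    rw [smul_smul, inv_mul_cancel₀ hc0, one_smul] at this
    exact hall 0 this
  · -- v 1 ≠ 0
    have hw : ((Matrix.diagonal d).mulVec ((Matrix.diagonal d).mulVec v)
        - (d 0 + d 2) • (Matrix.diagonal d).mulVec v + (d 0 * d 2) • v) ∈ W :=
      W.add_mem (W.sub_mem h2W (W.smul_mem _ h1W)) (W.smul_mem _ hv)
    have hc : ((Matrix.diagonal d).mulVec ((Matrix.diagonal d).mulVec v)
        - (d 0 + d 2) • (Matrix.diagonal d).mulVec v + (d 0 * d 2) • v)
        = ((d 1 - d 0) * (d 1 - d 2) * v 1) • (Pi.single 1 1 : Fin 3 → k) := by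
      funext m
      fin_cases m <;>
        simp [Matrix.mulVec_diagonal, Pi.single_apply] <;> ring
    have hc0 : (d 1 - d 0) * (d 1 - d 2) * v 1 ≠ 0 := by
      have e1 : d 1 - d 0 = a * (ζ ^ 2 - 1) := by simp [hd]; ring
      have e2 : d 1 - d 2 = a * ζ * (ζ - 1) := by simp [hd]; ring
      rw [e1, e2]
      exact mul_ne_zero (mul_ne_zero (mul_ne_zero ha (sub_ne_zero.mpr hζ2))
        (mul_ne_zero (mul_ne_zero ha hζ0) (sub_ne_zero.mpr hζ1))) hvi
    rw [hc] at hw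
    have := W.smul_mem ((d 1 - d 0) * (d 1 - d 2) * v 1)⁻¹ hw
    rw [smul_smul, inv_mul_cancel₀ hc0, one_smul] at this
    exact hall 1 this
  · -- v 2 ≠ 0
    have hw : ((Matrix.diagonal d).mulVec ((Matrix.diagonal d).mulVec v)
        - (d 0 + d 1) • (Matrix.diagonal d).mulVec v + (d 0 * d 1) • v) ∈ W :=
      W.add_mem (W.sub_mem h2W (W.smul_mem _ h1W)) (W.smul_mem _ hv)
    have hc : ((Matrix.diagonal d).mulVec ((Matrix.diagonal d).mulVec v)
        - (d 0 + d 1) • (Matrix.diagonal d).mulVec v + (d 0 * d 1) • v)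
        = ((d 2 - d 0) * (d 2 - d 1) * v 2) • (Pi.single 2 1 : Fin 3 → k) := by
      funext m
      fin_cases m <;>
        simp [Matrix.mulVec_diagonal, Pi.single_apply] <;> ring
    have hc0 : (d 2 - d 0) * (d 2 - d 1) * v 2 ≠ 0 := by
      have e1 : d 2 - d 0 = a * (ζ - 1) := by simp [hd]; ring
      have e2 : d 2 - d 1 = a * ζ * (1 - ζ) := by simp [hd]; ring
      rw [e1, e2]
      exact mul_ne_zero (mul_ne_zero (mul_ne_zero ha (sub_ne_zero.mpr hζ1))
        (mul_ne_zero (mul_ne_zero ha hζ0) (sub_ne_zero.mpr (Ne.symm hζ1)))) hvi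
    rw [hc] at hw
    have := W.smul_mem ((d 2 - d 0) * (d 2 - d 1) * v 2)⁻¹ hw
    rw [smul_smul, inv_mul_cancel₀ hc0, one_smul] at this
    exact hall 2 this
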